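/- Let n ≥ 1 clients hold losses ℓ_1,…,ℓ_n ∈ [0,B], let b ≥ 2 be a power of 2 with bin edges 0 = l_0 < l_1 < ⋯ < l_b = B, and for each client i and each node of the dyadic tree over the b bins (levels r = 0,…,log₂b − 1, indices j = 1,…,b/2^r) let x_i(r,j) ∈ {0,1} indicate that ℓ_i lies in the j-th block of 2^r consecutive bins. Let ξ_i(r,j) be i.i.d. discrete Gaussian N_ℤ(0,σ²) random variables with σ ≥ 1/2, let c be a positive integer, and let the server compute s(r,j) = (∑_{i=1}^n (c·x_i(r,j) + ξ_i(r,j))) mod M and ĥ = s/c, where the representative of the residue is taken in (−M/2, M/2]. Define the cumulative sums Ĥ(j) = ∑_{(r,o)∈P_j} ĥ(r,o) and H(j) = ∑_{(r,o)∈P_j} h(r,o) (h = ∑_i x_i the true counts), where P_j is the maximal dyadic partition of the range [1,j], and define j*_θ(Ĥ) = argmin_{j∈[b]} |Ĥ(j)/n − (1−θ)|, R*_θ(Ĥ) = min_{j∈[b]} |Ĥ(j)/n − (1−θ)|, and the quantile error Δ_θ(Ĥ,H) = |H(j*_θ(Ĥ))/n − (1−θ)|. Fix δ > 0 and assume M ≥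 2 + 2cn + 2n√(2σ² log(16nb/δ)). Then with probability at least 1 − δ, Δ_θ(Ĥ,H) ≤ R*_θ(Ĥ) + √((4σ²/(c²n)) · log₂b · log(4b/δ)). -/

import Mathlib

open MeasureTheory ProbabilityTheory
open scoped BigOperators

set_option maxHeartbeats 1000000

noncomputable section

section GaussAux
open Real Complex

lemma gauss_summable {a : ℝ} (ha : 0 < a) : Summable (fun k : ℤ => Real.exp (-a * (k:ℝ)^2)) := by
  apply Summable.of_nat_of_neg <;>
  · refine Summable.of_nonneg_of_le (fun n => (Real.exp_pos _).le)
      (f := fun n : ℕ => (Real.exp (-a))^n) ?_ ?_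
    · intro n
      rw [← Real.exp_nat_mul]
      apply Real.exp_le_exp.2
      have hn : (n:ℝ) ≤ (n:ℝ)^2 := by
        exact_mod_cast Nat.le_self_pow (by norm_num) n
      push_cast
      nlinarith [mul_le_mul_of_nonneg_left hn ha.le]
    · exact summable_geometric_of_lt_one (Real.exp_pos _).le
        (Real.exp_lt_one_iff.2 (by linarith))

lemma gauss_mgf_bound {σ t : ℝ} (hσ : 0 < σ) :
    (∑' k : ℤ, Real.exp (t * k - (k:ℝ)^2 / (2*σ^2)))
      ≤ Real.exp (σ^2 * t^2 / 2) * ∑' k : ℤ, Real.exp (-(k:ℝ)^2 / (2*σ^2)) := by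
  classical
  obtain ⟨a, ha_def⟩ : ∃ a : ℝ, a = 1 / (2 * π * σ^2) := ⟨_, rfl⟩
  have hπ := Real.pi_pos
  have ha : 0 < a := by rw [ha_def]; positivity
  obtain ⟨b, hb_def⟩ : ∃ b : ℝ, b = t / (2 * π) := ⟨_, rfl⟩
  have hpa : π * a = 1 / (2*σ^2) := by rw [ha_def]; field_simp
  have key := Complex.tsum_exp_neg_quadratic (a := (a:ℂ)) (by simpa using ha) (b:ℂ)
  have hπC : (π:ℂ) ≠ 0 := Complex.ofReal_ne_zero.mpr (ne_of_gt hπ)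
  have hσC : (σ:ℂ) ≠ 0 := Complex.ofReal_ne_zero.mpr (ne_of_gt hσ)
  -- LHS identification
  have hterm : ∀ k : ℤ, cexp (-(π:ℂ) * (a:ℂ) * (k:ℂ) ^ 2 + 2 * (π:ℂ) * (b:ℂ) * (k:ℂ))
      = ((Real.exp (t * k - (k:ℝ)^2 / (2*σ^2)) : ℝ) : ℂ) := by
    intro k
    rw [Complex.ofReal_exp]
    congr 1
    have h2 : (2:ℂ) * π * b = t := by
      rw [hb_def]; push_cast; field_simp
    rw [show -(π:ℂ) * a * (k:ℂ)^2 + 2 * π * b * k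
        = -(((π:ℝ)*a : ℝ) : ℂ) * (k:ℂ)^2 + ((2:ℂ)*π*b) * k by push_cast; ring, h2, hpa]
    push_cast
    field_simp
    ring
  have hLHS : ((∑' k : ℤ, Real.exp (t * k - (k:ℝ)^2 / (2*σ^2)) : ℝ) : ℂ)
      = ∑' n : ℤ, cexp (-(π:ℂ) * (a:ℂ) * (n:ℂ) ^ 2 + 2 * (π:ℂ) * (b:ℂ) * (n:ℂ)) := by
    rw [Complex.ofReal_tsum]
    exact tsum_congr fun k => (hterm k).symm
  -- norm of each RHS term
  have hnorm : ∀ n : ℤ, ‖(cexp (-(π:ℂ) / (a:ℂ) * ((n:ℂ) + I * (b:ℂ)) ^ 2))‖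
      = Real.exp (π/a * b^2) * Real.exp (-(π/a) * (n:ℝ)^2) := by
    intro n
    have hz : -(π:ℂ) / (a:ℂ) * ((n:ℂ) + I * (b:ℂ)) ^ 2
        = (((-(π/a) * ((n:ℝ)^2 - b^2)) : ℝ) : ℂ) + (((-(π/a) * (2*n*b)) : ℝ) : ℂ) * I := by
      push_cast
      ring_nf
      rw [Complex.I_sq]
      have haC : (a:ℂ) ≠ 0 := Complex.ofReal_ne_zero.mpr (ne_of_gt ha)
      field_simp
      ring
    rw [hz, Complex.norm_exp]
    simp only [Complex.add_re, Complex.ofReal_re, Complex.mul_re, Complex.I_re, Complex.I_im,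
      Complex.ofReal_im, mul_zero, zero_mul, mul_one, sub_zero, zero_sub]
    rw [← Real.exp_add]
    congr 1
    ring
  have hsum_norm : Summable (fun n : ℤ => ‖cexp (-(π:ℂ) / (a:ℂ) * ((n:ℂ) + I * (b:ℂ)) ^ 2)‖) := by
    apply Summable.congr (((gauss_summable (show 0 < π/a by positivity))).mul_left
      (Real.exp (π/a * b^2)))
    intro n; exact (hnorm n).symm
  -- the centered sum
  have hZ : (∑' k : ℤ, Real.exp (-(k:ℝ)^2 / (2*σ^2)))
      = 1 / a ^ ((1:ℝ)/2) * ∑' n : ℤ, Real.exp (-π/a * (n:ℝ)^2) := by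
    rw [← Real.tsum_exp_neg_mul_int_sq ha]
    apply tsum_congr
    intro k
    congr 1
    rw [show -π * a * (k:ℝ)^2 = -(π*a) * (k:ℝ)^2 by ring, hpa]
    field_simp
  -- put it together
  have habs : (∑' k : ℤ, Real.exp (t * k - (k:ℝ)^2 / (2*σ^2)))
      = ‖((∑' k : ℤ, Real.exp (t * k - (k:ℝ)^2 / (2*σ^2)) : ℝ) : ℂ)‖ := by
    rw [Complex.norm_real, Real.norm_eq_abs, _root_.abs_of_nonneg]
    exact tsum_nonneg fun k => (Real.exp_pos _).le
  rw [habs, hLHS, key]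
  rw [norm_mul]
  have h1 : ‖(1 / (a:ℂ) ^ ((1:ℂ)/2))‖ = 1 / a ^ ((1:ℝ)/2) := by
    rw [norm_div, norm_one, Complex.norm_cpow_eq_rpow_re_of_pos ha]
    norm_num
  have hW : ‖(∑' n : ℤ, cexp (-(π:ℂ)/(a:ℂ) * ((n:ℂ) + I * (b:ℂ))^2))‖
      ≤ Real.exp (π/a * b^2) * ∑' n : ℤ, Real.exp (-(π/a) * (n:ℝ)^2) := by
    have heq : (∑' n : ℤ, ‖(cexp (-(π:ℂ)/(a:ℂ) * ((n:ℂ) + I * (b:ℂ))^2))‖)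
        = Real.exp (π/a * b^2) * ∑' n : ℤ, Real.exp (-(π/a) * (n:ℝ)^2) := by
      rw [← tsum_mul_left]
      exact tsum_congr hnorm
    calc ‖(∑' n : ℤ, cexp (-(π:ℂ)/(a:ℂ) * ((n:ℂ) + I * (b:ℂ))^2))‖
        = ‖∑' n : ℤ, cexp (-(π:ℂ)/(a:ℂ) * ((n:ℂ) + I * (b:ℂ))^2)‖ := rfl
      _ ≤ ∑' n : ℤ, ‖cexp (-(π:ℂ)/(a:ℂ) * ((n:ℂ) + I * (b:ℂ))^2)‖ :=
          norm_tsum_le_tsum_norm hsum_norm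
      _ = ∑' n : ℤ, ‖(cexp (-(π:ℂ)/(a:ℂ) * ((n:ℂ) + I * (b:ℂ))^2))‖ :=
          tsum_congr fun n => rfl
      _ = _ := heq
  have hfin : 1 / a ^ ((1:ℝ)/2) * (Real.exp (π/a * b^2) * ∑' n : ℤ, Real.exp (-(π/a) * (n:ℝ)^2))
      = Real.exp (σ^2 * t^2 / 2) * ∑' k : ℤ, Real.exp (-(k:ℝ)^2 / (2*σ^2)) := by
    have he : π/a * b^2 = σ^2 * t^2 / 2 := by
      rw [hb_def, ha_def]; field_simp
    have h2 : (∑' n : ℤ, Real.exp (-(π/a) * (n:ℝ)^2)) = ∑' n : ℤ, Real.exp (-π/a * (n:ℝ)^2) :=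
      tsum_congr fun n => by ring_nf
    rw [he, h2, hZ]; ring
  calc ‖(1 / (a:ℂ) ^ ((1:ℂ)/2))‖ * ‖(∑' n : ℤ, cexp (-(π:ℂ)/(a:ℂ) * ((n:ℂ) + I * (b:ℂ))^2))‖
      ≤ 1 / a ^ ((1:ℝ)/2) * (Real.exp (π/a * b^2) * ∑' n : ℤ, Real.exp (-(π/a) * (n:ℝ)^2)) := by
        rw [h1]
        exact mul_le_mul_of_nonneg_left hW (by positivity)
    _ = Real.exp (σ^2 * t^2 / 2) * ∑' k : ℤ, Real.exp (-(k:ℝ)^2 / (2*σ^2)) := hfin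

lemma gauss_shift_summable {a t : ℝ} (ha : 0 < a) :
    Summable (fun k : ℤ => Real.exp (t * k - a * (k:ℝ)^2)) := by
  refine Summable.of_nonneg_of_le (fun k => (Real.exp_pos _).le)
    (f := fun k : ℤ => Real.exp (t^2/(2*a)) * Real.exp (-(a/2) * (k:ℝ)^2)) ?_ ?_
  · intro k
    rw [← Real.exp_add]
    apply Real.exp_le_exp.2
    have haux : t^2/(2*a)*(2*a) = t^2 := by field_simp
    nlinarith [sq_nonneg (a*(k:ℝ) - t), ha, sq_nonneg (k:ℝ)]
  · exact ((gauss_summable (by linarith : 0 < a/2))).mul_left _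

end GaussAux

section Machinery
open Real

variable {Ω : Type*} [MeasurableSpace Ω] (P : Measure Ω) [IsProbabilityMeasure P]

lemma tsum_law (X : Ω → ℤ) (hX : Measurable X) : (∑' k : ℤ, P {ω | X ω = k}) = 1 := by
  have hu : ⋃ k : ℤ, X ⁻¹' {k} = Set.univ := by
    ext ω; simp
  have hd : Pairwise (Function.onFun Disjoint fun k : ℤ => X ⁻¹' {k}) := by
    intro i j hij
    apply Set.disjoint_left.2
    intro ω hi hj
    exact hij ((Set.mem_preimage.1 hi).symm.trans (Set.mem_preimage.1 hj))
  have := measure_iUnion (μ := P) hd (fun k => hX (measurableSet_singleton k))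
  rw [hu, measure_univ] at this
  exact this.symm

lemma shift_sq (σ : ℝ) (k : ℤ) (t : ℝ) :
    Real.exp (t * k) * (Real.exp (-(k:ℝ)^2/(2*σ^2))) = Real.exp (t*k - (k:ℝ)^2/(2*σ^2)) := by
  rw [← Real.exp_add]; ring_nf

section DGauss
variable (σ C : ℝ) (hσ : 0 < σ) (X : Ω → ℤ) (hX : Measurable X)
  (hlawX : ∀ k : ℤ, P {ω | X ω = k} = ENNReal.ofReal (C * Real.exp (-(k : ℝ) ^ 2 / (2 * σ ^ 2))))

include hσ hX hlawX

lemma dgauss_norm : 0 < C ∧ C * (∑' k : ℤ, Real.exp (-(k:ℝ)^2/(2*σ^2))) = 1 := by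
  have hsum : Summable (fun k : ℤ => Real.exp (-(k:ℝ)^2/(2*σ^2))) := by
    have := gauss_summable (show 0 < 1/(2*σ^2) by positivity)
    apply this.congr
    intro k; congr 1; field_simp
  have htot := tsum_law P X hX
  simp_rw [hlawX] at htot
  have hC : 0 < C := by
    by_contra h
    push_neg at h
    have : ∀ k : ℤ, ENNReal.ofReal (C * Real.exp (-(k:ℝ)^2/(2*σ^2))) = 0 := by
      intro k
      rw [ENNReal.ofReal_eq_zero]
      exact mul_nonpos_of_nonpos_of_nonneg h (Real.exp_pos _).le
    rw [tsum_congr this] at htot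
    simp at htot
  refine ⟨hC, ?_⟩
  have hnn : ∀ k : ℤ, 0 ≤ C * Real.exp (-(k:ℝ)^2/(2*σ^2)) :=
    fun k => mul_nonneg hC.le (Real.exp_pos _).le
  rw [← ENNReal.ofReal_tsum_of_nonneg hnn (hsum.mul_left C)] at htot
  have := ENNReal.ofReal_eq_one.1 htot
  rwa [tsum_mul_left] at this

lemma dgauss_integrable (t : ℝ) : Integrable (fun ω => Real.exp (t * (X ω : ℝ))) P := by
  obtain ⟨hC, hCZ⟩ := dgauss_norm P σ C hσ X hX hlawX
  set g : ℤ → ℝ := fun k => Real.exp (t * k) with hg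
  have hg_meas : Measurable g := measurable_from_top
  have hmap : ∀ k : ℤ, (P.map X) {k} = ENNReal.ofReal (C * Real.exp (-(k:ℝ)^2/(2*σ^2))) := by
    intro k
    rw [Measure.map_apply hX (measurableSet_singleton k)]
    exact hlawX k
  have hint : Integrable g (P.map X) := by
    refine ⟨hg_meas.aestronglyMeasurable, ?_⟩
    rw [HasFiniteIntegral, lintegral_countable']
    have heq : ∀ k : ℤ, ‖g k‖ₑ * (P.map X) {k}
        = ENNReal.ofReal (C * Real.exp (t*k - (k:ℝ)^2/(2*σ^2))) := by
      intro k
      rw [hmap k, Real.enorm_eq_ofReal (Real.exp_pos _).le, ← ENNReal.ofReal_mul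
        (Real.exp_pos _).le]
      congr 1
      rw [show Real.exp (t*k) * (C * Real.exp (-(k:ℝ)^2/(2*σ^2)))
          = C * (Real.exp (t*k) * Real.exp (-(k:ℝ)^2/(2*σ^2))) by ring, shift_sq]
    rw [tsum_congr heq]
    have hsum2 : Summable (fun k : ℤ => C * Real.exp (t*k - (k:ℝ)^2/(2*σ^2))) := by
      apply Summable.mul_left
      have := gauss_shift_summable (a := 1/(2*σ^2)) (t := t) (by positivity)
      apply this.congr
      intro k; congr 1; field_simp
    rw [← ENNReal.ofReal_tsum_of_nonneg
      (fun k => mul_nonneg hC.le (Real.exp_pos _).le) hsum2]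
    exact ENNReal.ofReal_lt_top
  have := (integrable_map_measure hg_meas.aestronglyMeasurable hX.aemeasurable).1 hint
  exact this

lemma dgauss_mgf_le (t : ℝ) : mgf (fun ω => (X ω : ℝ)) P t ≤ Real.exp (σ^2 * t^2 / 2) := by
  obtain ⟨hC, hCZ⟩ := dgauss_norm P σ C hσ X hX hlawX
  set g : ℤ → ℝ := fun k => Real.exp (t * k) with hg
  have hg_meas : Measurable g := measurable_from_top
  have hmap : ∀ k : ℤ, (P.map X) {k} = ENNReal.ofReal (C * Real.exp (-(k:ℝ)^2/(2*σ^2))) := by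
    intro k
    rw [Measure.map_apply hX (measurableSet_singleton k)]
    exact hlawX k
  have hint : Integrable g (P.map X) := by
    rw [integrable_map_measure hg_meas.aestronglyMeasurable hX.aemeasurable]
    exact dgauss_integrable P σ C hσ X hX hlawX t
  have h1 : mgf (fun ω => (X ω : ℝ)) P t = ∫ k, g k ∂(P.map X) := by
    rw [mgf, integral_map hX.aemeasurable hg_meas.aestronglyMeasurable]
  rw [h1, integral_countable' hint]
  have h2 : ∀ k : ℤ, (P.map X).real {k} • g k = C * Real.exp (t*k - (k:ℝ)^2/(2*σ^2)) := by
    intro k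
    rw [measureReal_def, hmap k, ENNReal.toReal_ofReal (mul_nonneg hC.le (Real.exp_pos _).le), smul_eq_mul]
    rw [show C * Real.exp (-(k:ℝ)^2/(2*σ^2)) * g k
        = C * (Real.exp (t*k) * Real.exp (-(k:ℝ)^2/(2*σ^2))) by simp only [hg]; ring, shift_sq]
  rw [tsum_congr h2, tsum_mul_left]
  calc C * ∑' k : ℤ, Real.exp (t*k - (k:ℝ)^2/(2*σ^2))
      ≤ C * (Real.exp (σ^2*t^2/2) * ∑' k : ℤ, Real.exp (-(k:ℝ)^2/(2*σ^2))) :=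
        mul_le_mul_of_nonneg_left (gauss_mgf_bound hσ) hC.le
    _ = Real.exp (σ^2*t^2/2) * (C * ∑' k : ℤ, Real.exp (-(k:ℝ)^2/(2*σ^2))) := by ring
    _ = Real.exp (σ^2*t^2/2) := by rw [hCZ, mul_one]

lemma dgauss_tail_upper (ε : ℝ) (hε : 0 ≤ ε) :
    P {ω | ε ≤ (X ω : ℝ)} ≤ ENNReal.ofReal (Real.exp (-ε^2/(2*σ^2))) := by
  have ht : 0 ≤ ε/σ^2 := by positivity
  have hch := measure_ge_le_exp_mul_mgf (μ := P) (X := fun ω => (X ω : ℝ)) ε ht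
    (dgauss_integrable P σ C hσ X hX hlawX (ε/σ^2))
  have hm := dgauss_mgf_le P σ C hσ X hX hlawX (ε/σ^2)
  have hb : Real.exp (-(ε/σ^2) * ε) * mgf (fun ω => (X ω : ℝ)) P (ε/σ^2)
      ≤ Real.exp (-ε^2/(2*σ^2)) := by
    calc Real.exp (-(ε/σ^2) * ε) * mgf (fun ω => (X ω : ℝ)) P (ε/σ^2)
        ≤ Real.exp (-(ε/σ^2) * ε) * Real.exp (σ^2 * (ε/σ^2)^2 / 2) :=
          mul_le_mul_of_nonneg_left hm (Real.exp_pos _).le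
      _ = Real.exp (-ε^2/(2*σ^2)) := by
          rw [← Real.exp_add]; congr 1; field_simp; ring
  have := le_trans hch hb
  rw [← ENNReal.ofReal_toReal (measure_ne_top P _)]
  exact ENNReal.ofReal_le_ofReal this

lemma dgauss_tail_lower (ε : ℝ) (hε : 0 ≤ ε) :
    P {ω | (X ω : ℝ) ≤ -ε} ≤ ENNReal.ofReal (Real.exp (-ε^2/(2*σ^2))) := by
  have ht : -(ε/σ^2) ≤ 0 := neg_nonpos.2 (by positivity)
  have hch := measure_le_le_exp_mul_mgf (μ := P) (X := fun ω => (X ω : ℝ)) (-ε) ht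
    (dgauss_integrable P σ C hσ X hX hlawX (-(ε/σ^2)))
  have hm := dgauss_mgf_le P σ C hσ X hX hlawX (-(ε/σ^2))
  have hb : Real.exp (-(-(ε/σ^2)) * (-ε)) * mgf (fun ω => (X ω : ℝ)) P (-(ε/σ^2))
      ≤ Real.exp (-ε^2/(2*σ^2)) := by
    calc Real.exp (-(-(ε/σ^2)) * (-ε)) * mgf (fun ω => (X ω : ℝ)) P (-(ε/σ^2))
        ≤ Real.exp (-(-(ε/σ^2)) * (-ε)) * Real.exp (σ^2 * (-(ε/σ^2))^2 / 2) :=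
          mul_le_mul_of_nonneg_left hm (Real.exp_pos _).le
      _ = Real.exp (-ε^2/(2*σ^2)) := by
          rw [← Real.exp_add]; congr 1; field_simp; ring
  have := le_trans hch hb
  rw [← ENNReal.ofReal_toReal (measure_ne_top P _)]
  exact ENNReal.ofReal_le_ofReal this

end DGauss

lemma bmod_eq_self {v : ℤ} {M : ℕ} (h : 2 * v.natAbs < M) : Int.bmod v M = v := by
  have hM : 0 < (M:ℤ) := by omega
  rw [Int.bmod_def]
  rcases le_or_gt 0 v with hv | hv
  · have hmod : v % (M:ℤ) = v := Int.emod_eq_of_lt hv (by omega)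
    rw [hmod]
    split <;> omega
  · have hmod : v % (M:ℤ) = v + M := by
      have h1 : (v + M) % (M:ℤ) = v + M := Int.emod_eq_of_lt (by omega) (by omega)
      have h2 : (v + (M:ℤ)) % M = v % M := by
        simpa using Int.add_mul_emod_self_left (a := v) (b := (M:ℤ)) (c := 1)
      omega
    rw [hmod]
    split <;> omega

lemma dgauss_sum_tail {ι : Type*} (σ C : ℝ) (hσ : 0 < σ)
    (ξ' : ι → Ω → ℤ) (hmeas : ∀ i, Measurable (ξ' i))
    (hindep : iIndepFun (fun i ω => ξ' i ω) P)
    (hlaw : ∀ i (k : ℤ), P {ω | ξ' i ω = k}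
      = ENNReal.ofReal (C * Real.exp (-(k : ℝ) ^ 2 / (2 * σ ^ 2))))
    (s : Finset ι) (m : ℕ) (hcard : s.card ≤ m) (hm : 0 < m) (ε : ℝ) (hε : 0 ≤ ε) :
    P {ω | ε ≤ |∑ i ∈ s, (ξ' i ω : ℝ)|}
      ≤ 2 * ENNReal.ofReal (Real.exp (-ε^2/(2*σ^2*m))) := by
  classical
  set Y : ι → Ω → ℝ := fun i ω => (ξ' i ω : ℝ) with hY
  have hYmeas : ∀ i, Measurable (Y i) := fun i => measurable_from_top.comp (hmeas i)
  have hYindep : iIndepFun Y P :=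
    hindep.comp (fun _ => (Int.cast : ℤ → ℝ)) (fun _ => measurable_from_top)
  have hYint : ∀ (t : ℝ), ∀ i ∈ s, Integrable (fun ω => Real.exp (t * Y i ω)) P :=
    fun t i _ => dgauss_integrable P σ C hσ (ξ' i) (hmeas i) (hlaw i) t
  have hmgf : ∀ t : ℝ, mgf (∑ i ∈ s, Y i) P t ≤ Real.exp ((m:ℝ) * (σ^2 * t^2 / 2)) := by
    intro t
    rw [hYindep.mgf_sum hYmeas s]
    calc ∏ i ∈ s, mgf (Y i) P t
        ≤ ∏ i ∈ s, Real.exp (σ^2 * t^2 / 2) := by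
          apply Finset.prod_le_prod (fun i _ => mgf_nonneg)
          exact fun i _ => dgauss_mgf_le P σ C hσ (ξ' i) (hmeas i) (hlaw i) t
      _ = Real.exp (σ^2 * t^2 / 2) ^ s.card := by rw [Finset.prod_const]
      _ ≤ Real.exp (σ^2 * t^2 / 2) ^ m := by
          apply pow_le_pow_right₀ (Real.one_le_exp (by positivity)) hcard
      _ = Real.exp ((m:ℝ) * (σ^2 * t^2 / 2)) := by
          rw [← Real.exp_nat_mul]
  set t : ℝ := ε / (σ^2 * m) with ht_def
  have ht : 0 ≤ t := by positivity
  have hexp : Real.exp (-t * ε) * Real.exp ((m:ℝ) * (σ^2 * t^2 / 2))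
      = Real.exp (-ε^2/(2*σ^2*m)) := by
    rw [← Real.exp_add]
    congr 1
    rw [ht_def]
    have hm' : (m:ℝ) ≠ 0 := Nat.cast_ne_zero.2 hm.ne'
    field_simp
    ring
  have hsfun : (fun ω => ∑ i ∈ s, Y i ω) = ∑ i ∈ s, Y i := by
    funext ω; rw [Finset.sum_apply]
  have hup : P {ω | ε ≤ ∑ i ∈ s, Y i ω} ≤ ENNReal.ofReal (Real.exp (-ε^2/(2*σ^2*m))) := by
    have hch := measure_ge_le_exp_mul_mgf (μ := P) (X := ∑ i ∈ s, Y i) ε ht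
      (hYindep.integrable_exp_mul_sum hYmeas (hYint t))
    have : (P {ω | ε ≤ (∑ i ∈ s, Y i) ω}).toReal ≤ Real.exp (-ε^2/(2*σ^2*m)) := by
      refine hch.trans ?_
      rw [← hexp]
      exact mul_le_mul_of_nonneg_left (hmgf t) (Real.exp_pos _).le
    have hset : {ω | ε ≤ ∑ i ∈ s, Y i ω} = {ω | ε ≤ (∑ i ∈ s, Y i) ω} := by
      ext ω; simp [Finset.sum_apply]
    rw [hset, ← ENNReal.ofReal_toReal (measure_ne_top P _)]
    exact ENNReal.ofReal_le_ofReal this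
  have hlo : P {ω | (∑ i ∈ s, Y i ω) ≤ -ε} ≤ ENNReal.ofReal (Real.exp (-ε^2/(2*σ^2*m))) := by
    have hch := measure_le_le_exp_mul_mgf (μ := P) (X := ∑ i ∈ s, Y i) (-ε)
      (neg_nonpos.2 ht) (hYindep.integrable_exp_mul_sum hYmeas (hYint (-t)))
    have : (P {ω | (∑ i ∈ s, Y i) ω ≤ -ε}).toReal ≤ Real.exp (-ε^2/(2*σ^2*m)) := by
      refine hch.trans ?_
      have h1 : Real.exp (-(-t) * (-ε)) = Real.exp (-t*ε) := by ring_nf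
      have h2 : mgf (∑ i ∈ s, Y i) P (-t) ≤ Real.exp ((m:ℝ) * (σ^2 * t^2 / 2)) := by
        have := hmgf (-t)
        simpa using this
      rw [h1, ← hexp]
      exact mul_le_mul_of_nonneg_left h2 (Real.exp_pos _).le
    have hset : {ω | (∑ i ∈ s, Y i ω) ≤ -ε} = {ω | (∑ i ∈ s, Y i) ω ≤ -ε} := by
      ext ω; simp [Finset.sum_apply]
    rw [hset, ← ENNReal.ofReal_toReal (measure_ne_top P _)]
    exact ENNReal.ofReal_le_ofReal this
  calc P {ω | ε ≤ |∑ i ∈ s, (ξ' i ω : ℝ)|}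
      ≤ P ({ω | ε ≤ ∑ i ∈ s, Y i ω} ∪ {ω | (∑ i ∈ s, Y i ω) ≤ -ε}) := by
        apply measure_mono
        intro ω hω
        have hω' : ε ≤ |∑ i ∈ s, Y i ω| := hω
        rcases le_abs.1 hω' with h | h
        · exact Or.inl h
        · exact Or.inr (by simpa using le_neg.1 h)
    _ ≤ P {ω | ε ≤ ∑ i ∈ s, Y i ω} + P {ω | (∑ i ∈ s, Y i ω) ≤ -ε} := measure_union_le _ _
    _ ≤ ENNReal.ofReal (Real.exp (-ε^2/(2*σ^2*m))) + ENNReal.ofReal (Real.exp (-ε^2/(2*σ^2*m))) :=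
        add_le_add hup hlo
    _ = 2 * ENNReal.ofReal (Real.exp (-ε^2/(2*σ^2*m))) := (two_mul _).symm

end Machinery

lemma aux_pow_sum (q : ℕ) : (∑ r ∈ Finset.range q, 2^(q-r)) ≤ 2^(q+1) := by
  induction q with
  | zero => simp
  | succ q ih =>
    rw [Finset.sum_range_succ']
    have h1 : ∀ i ∈ Finset.range q, 2^(q+1-(i+1)) = 2^(q-i) := by
      intro i hi; congr 1; omega
    rw [Finset.sum_congr rfl h1]
    have : 2^(q+1-0) = 2^(q+1) := by norm_num
    rw [this]
    calc (∑ r ∈ Finset.range q, 2^(q-r)) + 2^(q+1) ≤ 2^(q+1) + 2^(q+1) := by omega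
      _ = 2^(q+2) := by ring


/-- Utility of differentially private quantile estimation via hierarchical histograms with
distributed discrete Gaussian noise: under the modulus condition
`M ≥ 2 + 2cn + 2n√(2σ² log(16nb/δ))`, with probability at least `1 − δ` the quantile error
satisfies `Δ_θ(Ĥ, H) ≤ R*_θ(Ĥ) + √((4σ²/(c²n)) · log₂ b · log(4b/δ))`.
Here `b = 2^q` (so `log₂ b = q`), the modular reduction takes the balanced representative
(`Int.bmod`), `Ĥ(j) = ∑_{(r,o) ∈ P_j} ĥ(r,o)` with `ĥ = s/c`, `H` is the corresponding
cumulative sum of the true counts, `jstar ω` is a minimizer of `|Ĥ(j)/n − (1−θ)|`, so that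
`R*_θ(Ĥ) = |Ĥ(jstar)/n − (1−θ)|`, and `Δ_θ(Ĥ, H) = |H(jstar)/n − (1−θ)|`. -/
theorem dp_quantile_utility
    {Ω : Type*} [MeasurableSpace Ω] (P : Measure Ω) [IsProbabilityMeasure P]
    (n b q c M : ℕ) (hn : 1 ≤ n) (hq : 1 ≤ q) (hbq : b = 2 ^ q) (hc : 0 < c)
    (σ θ δ B : ℝ) (hσ : 1 / 2 ≤ σ) (hθ : θ ∈ Set.Ioo (0:ℝ) 1) (hδ : 0 < δ) (hB : 0 < B)
    (hM : 2 + 2 * (c : ℝ) * n + 2 * n * Real.sqrt (2 * σ ^ 2 * Real.log (16 * n * b / δ))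
      ≤ (M : ℝ))
    (l : ℕ → ℝ) (hl0 : l 0 = 0) (hlB : l b = B) (hlmono : ∀ j < b, l j < l (j + 1))
    (ℓ : Fin n → ℝ) (hℓ : ∀ i, ℓ i ∈ Set.Icc (0:ℝ) B)
    (x : Fin n → ℕ × ℕ → ℤ)
    (hx : ∀ i r j, x i (r, j) =
      if ℓ i ∈ Set.Ico (l (2 ^ r * (j - 1))) (l (2 ^ r * j)) then 1 else 0)
    (C : ℝ)
    (ξ : Fin n → ℕ × ℕ → Ω → ℤ)
    (hmeas : ∀ i p, Measurable (ξ i p))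
    (hindep : iIndepFun (fun (ip : Fin n × (ℕ × ℕ)) ω => ξ ip.1 ip.2 ω) P)
    (hlaw : ∀ i p (k : ℤ), P {ω | ξ i p ω = k}
      = ENNReal.ofReal (C * Real.exp (-(k : ℝ) ^ 2 / (2 * σ ^ 2))))
    (Pj : Fin b → Finset (ℕ × ℕ))
    (hPvalid : ∀ j, ∀ p ∈ Pj j, p.1 < q ∧ 1 ≤ p.2 ∧ p.2 ≤ 2 ^ (q - p.1))
    (hPcard : ∀ j, (Pj j).card ≤ q)
    (hPdisj : ∀ j : Fin b, ((Pj j : Set (ℕ × ℕ))).PairwiseDisjoint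
      (fun p => Finset.Icc (2 ^ p.1 * (p.2 - 1) + 1) (2 ^ p.1 * p.2)))
    (hPunion : ∀ j : Fin b,
      (Pj j).biUnion (fun p => Finset.Icc (2 ^ p.1 * (p.2 - 1) + 1) (2 ^ p.1 * p.2))
        = Finset.Icc 1 ((j : ℕ) + 1))
    (s : Ω → ℕ × ℕ → ℤ)
    (hs : ∀ ω p, s ω p = Int.bmod (∑ i, ((c : ℤ) * x i p + ξ i p ω)) M)
    (Hhat : Ω → Fin b → ℝ)
    (hHhat : ∀ ω j, Hhat ω j = ∑ p ∈ Pj j, (s ω p : ℝ) / (c : ℝ))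
    (H : Fin b → ℝ)
    (hH : ∀ j, H j = ∑ p ∈ Pj j, ((∑ i, x i p : ℤ) : ℝ))
    (jstar : Ω → Fin b)
    (hjstar : ∀ ω j, |Hhat ω (jstar ω) / n - (1 - θ)| ≤ |Hhat ω j / n - (1 - θ)|) :
    ENNReal.ofReal (1 - δ) ≤
      P {ω | |H (jstar ω) / n - (1 - θ)| ≤ |Hhat ω (jstar ω) / n - (1 - θ)|
        + Real.sqrt (4 * σ ^ 2 / ((c : ℝ) ^ 2 * n) * q * Real.log (4 * b / δ))} := by
  classical
  by_cases hδ1 : 1 ≤ δ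
  · have h0 : ENNReal.ofReal (1 - δ) = 0 := by
      rw [ENNReal.ofReal_eq_zero]; linarith
    rw [h0]; exact zero_le
  push_neg at hδ1
  -- basic facts
  have hσ0 : 0 < σ := lt_of_lt_of_le (by norm_num) hσ
  have hn0 : (0:ℝ) < n := by exact_mod_cast hn
  have hb2 : 2 ≤ b := by
    rw [hbq]
    calc 2 = 2^1 := by norm_num
      _ ≤ 2^q := Nat.pow_le_pow_right (by norm_num) hq
  have hb0 : (0:ℝ) < b := by positivity
  have hb2R : (2:ℝ) ≤ b := by exact_mod_cast hb2
  have hq0 : (0:ℝ) < q := by exact_mod_cast hq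
  have hc0 : (0:ℝ) < c := by exact_mod_cast hc
  have hbR : ((2:ℝ))^q = b := by
    rw [hbq]; push_cast; ring
  have hn1R : (1:ℝ) ≤ n := by exact_mod_cast hn
  have hnb2 : (2:ℝ) ≤ (n:ℝ) * b := by nlinarith [mul_nonneg (sub_nonneg.2 hn1R) hb0.le]
  have hL1 : 0 < Real.log (16 * n * b / δ) := by
    apply Real.log_pos
    rw [lt_div_iff₀ hδ]
    nlinarith
  have hL : 0 < Real.log (4 * b / δ) := by
    apply Real.log_pos
    rw [lt_div_iff₀ hδ]
    nlinarith
  set τ : ℝ := Real.sqrt (2 * σ ^ 2 * Real.log (16 * n * b / δ)) with hτ_def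
  set τ₂ : ℝ := Real.sqrt (4 * σ^2 * ((n:ℝ) * q) * Real.log (4 * b / δ)) with hτ₂_def
  have hτ0 : 0 ≤ τ := Real.sqrt_nonneg _
  have hτ₂0 : 0 ≤ τ₂ := Real.sqrt_nonneg _
  -- node set
  set N : Finset (ℕ × ℕ) :=
    (Finset.range q).biUnion (fun r => (Finset.Icc 1 (2^(q-r))).image (fun o => (r, o)))
    with hN_def
  have hPsub : ∀ j : Fin b, Pj j ⊆ N := by
    intro j p hp
    obtain ⟨h1, h2, h3⟩ := hPvalid j p hp
    rw [hN_def]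
    apply Finset.mem_biUnion.2
    exact ⟨p.1, Finset.mem_range.2 h1,
      Finset.mem_image.2 ⟨p.2, Finset.mem_Icc.2 ⟨h2, h3⟩, Prod.mk.eta⟩⟩
  have hNcard : N.card ≤ 2^(q+1) := by
    calc N.card ≤ ∑ r ∈ Finset.range q, ((Finset.Icc 1 (2^(q-r))).image (fun o => (r, o))).card :=
          Finset.card_biUnion_le
      _ ≤ ∑ r ∈ Finset.range q, 2^(q-r) := by
          apply Finset.sum_le_sum
          intro r _
          calc ((Finset.Icc 1 (2^(q-r))).image (fun o => (r, o))).card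
              ≤ (Finset.Icc 1 (2^(q-r))).card := Finset.card_image_le
            _ = 2^(q-r) := by rw [Nat.card_Icc, Nat.add_sub_cancel]
      _ ≤ 2^(q+1) := aux_pow_sum q
  -- bad events
  set E1 : Fin n → (ℕ × ℕ) → Set Ω := fun i p => {ω | τ ≤ |(ξ i p ω : ℝ)|} with hE1_def
  set E2 : Fin b → Set Ω :=
    fun j => {ω | τ₂ ≤ |∑ ip ∈ (Finset.univ : Finset (Fin n)) ×ˢ Pj j, (ξ ip.1 ip.2 ω : ℝ)|}
    with hE2_def
  have hE1b : ∀ i p, P (E1 i p) ≤ ENNReal.ofReal (δ / (8 * n * b)) := by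
    intro i p
    have h := dgauss_sum_tail P σ C hσ0 (fun ip ω => ξ ip.1 ip.2 ω)
      (fun ip => hmeas ip.1 ip.2) hindep (fun ip k => hlaw ip.1 ip.2 k)
      ({(i, p)} : Finset (Fin n × (ℕ × ℕ))) 1 (by simp) (by norm_num) τ hτ0
    have hset : {ω | τ ≤ |∑ ip ∈ ({(i, p)} : Finset (Fin n × (ℕ × ℕ))), (ξ ip.1 ip.2 ω : ℝ)|}
        = E1 i p := by
      ext ω; simp [hE1_def]
    rw [hset] at h
    refine h.trans ?_
    have hexp : Real.exp (-τ^2/(2*σ^2*(1:ℕ))) = δ / (16 * n * b) := by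
      rw [hτ_def, Real.sq_sqrt (by positivity)]
      rw [show -(2 * σ ^ 2 * Real.log (16 * n * b / δ))/(2*σ^2*(1:ℕ))
          = -Real.log (16 * n * b / δ) by push_cast; field_simp]
      rw [Real.exp_neg, Real.exp_log (by positivity), inv_div]
    rw [hexp, ← ENNReal.ofReal_ofNat 2, ← ENNReal.ofReal_mul (by norm_num)]
    apply ENNReal.ofReal_le_ofReal
    rw [show (2:ℝ) * (δ / (16 * n * b)) = δ / (8 * n * b) by ring]
  have hE2b : ∀ j, P (E2 j) ≤ ENNReal.ofReal (2 * (δ / (4 * b))^2) := by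
    intro j
    have h := dgauss_sum_tail P σ C hσ0 (fun ip ω => ξ ip.1 ip.2 ω)
      (fun ip => hmeas ip.1 ip.2) hindep (fun ip k => hlaw ip.1 ip.2 k)
      ((Finset.univ : Finset (Fin n)) ×ˢ Pj j) (n * q)
      (by rw [Finset.card_product, Finset.card_univ, Fintype.card_fin]
          exact Nat.mul_le_mul_left n (hPcard j))
      (by positivity) τ₂ hτ₂0
    refine h.trans ?_
    have hexp : Real.exp (-τ₂^2/(2*σ^2*((n*q:ℕ):ℝ))) = (δ / (4 * b))^2 := by
      rw [hτ₂_def, Real.sq_sqrt (by positivity)]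
      rw [show -(4 * σ^2 * ((n:ℝ) * q) * Real.log (4 * b / δ))/(2*σ^2*((n*q:ℕ):ℝ))
          = -(2 * Real.log (4 * b / δ)) by push_cast; field_simp; ring]
      rw [show -(2 * Real.log (4 * b / δ)) = (-Real.log (4 * b / δ)) * 2 by ring]
      rw [Real.exp_mul, Real.exp_neg, Real.exp_log (by positivity), inv_div]
      norm_num
    rw [hexp, ← ENNReal.ofReal_ofNat 2, ← ENNReal.ofReal_mul (by norm_num)]
  -- the bad set
  set Bad : Set Ω := (⋃ i : Fin n, ⋃ p ∈ N, E1 i p) ∪ ⋃ j : Fin b, E2 j with hBad_def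
  have hE1meas : ∀ i p, MeasurableSet (E1 i p) := by
    intro i p
    apply measurableSet_le measurable_const
    exact (measurable_from_top (f := fun k : ℤ => |(k:ℝ)|)).comp (hmeas i p)
  have hE2meas : ∀ j, MeasurableSet (E2 j) := by
    intro j
    apply measurableSet_le measurable_const
    apply Measurable.abs
    apply Finset.measurable_sum
    intro ip _
    exact (measurable_from_top (f := fun k : ℤ => (k:ℝ))).comp (hmeas ip.1 ip.2)
  have hBadMeas : MeasurableSet Bad := by
    apply MeasurableSet.union
    · exact MeasurableSet.iUnion fun i => N.measurableSet_biUnion (fun p _ => hE1meas i p)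
    · exact MeasurableSet.iUnion fun j => hE2meas j
  -- probability of bad
  have hBadP : P Bad ≤ ENNReal.ofReal δ := by
    have hB1 : P (⋃ i : Fin n, ⋃ p ∈ N, E1 i p) ≤ ENNReal.ofReal (δ/2) := by
      calc P (⋃ i : Fin n, ⋃ p ∈ N, E1 i p)
          ≤ ∑' i : Fin n, P (⋃ p ∈ N, E1 i p) := measure_iUnion_le _
        _ = ∑ i : Fin n, P (⋃ p ∈ N, E1 i p) := tsum_fintype _
        _ ≤ ∑ i : Fin n, ∑ p ∈ N, P (E1 i p) :=
            Finset.sum_le_sum fun i _ => measure_biUnion_finset_le _ _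
        _ ≤ ∑ _i : Fin n, ∑ _p ∈ N, ENNReal.ofReal (δ / (8 * n * b)) :=
            Finset.sum_le_sum fun i _ => Finset.sum_le_sum fun p _ => hE1b i p
        _ = (n * N.card) • ENNReal.ofReal (δ / (8 * n * b)) := by
            rw [Finset.sum_const, Finset.sum_const, Finset.card_univ, Fintype.card_fin,
              smul_smul]
        _ = ENNReal.ofReal (((n * N.card : ℕ) : ℝ) * (δ / (8 * n * b))) := by
            rw [nsmul_eq_mul, ← ENNReal.ofReal_natCast (n * N.card),
              ← ENNReal.ofReal_mul (Nat.cast_nonneg _)]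
        _ ≤ ENNReal.ofReal (δ/2) := by
            apply ENNReal.ofReal_le_ofReal
            have hNR : ((n * N.card : ℕ) : ℝ) ≤ (n:ℝ) * (2 * b) := by
              push_cast
              have h1 : (N.card : ℝ) ≤ ((2:ℕ)^(q+1) : ℕ) := Nat.cast_le.2 hNcard
              have h2 : (((2:ℕ)^(q+1) : ℕ) : ℝ) = 2 * b := by
                push_cast; rw [pow_succ]; rw [hbR]; ring
              nlinarith
            calc ((n * N.card : ℕ) : ℝ) * (δ / (8 * n * b))
                ≤ ((n:ℝ) * (2 * b)) * (δ / (8 * n * b)) := by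
                  apply mul_le_mul_of_nonneg_right hNR (by positivity)
              _ = δ/4 := by field_simp; ring
              _ ≤ δ/2 := by linarith
    have hB2 : P (⋃ j : Fin b, E2 j) ≤ ENNReal.ofReal (δ/2) := by
      calc P (⋃ j : Fin b, E2 j)
          ≤ ∑' j : Fin b, P (E2 j) := measure_iUnion_le _
        _ = ∑ j : Fin b, P (E2 j) := tsum_fintype _
        _ ≤ ∑ _j : Fin b, ENNReal.ofReal (2 * (δ / (4 * b))^2) :=
            Finset.sum_le_sum fun j _ => hE2b j
        _ = b • ENNReal.ofReal (2 * (δ / (4 * b))^2) := by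
            rw [Finset.sum_const, Finset.card_univ, Fintype.card_fin]
        _ = ENNReal.ofReal ((b:ℝ) * (2 * (δ / (4 * b))^2)) := by
            rw [nsmul_eq_mul, ← ENNReal.ofReal_natCast b,
              ← ENNReal.ofReal_mul (Nat.cast_nonneg _)]
        _ ≤ ENNReal.ofReal (δ/2) := by
            apply ENNReal.ofReal_le_ofReal
            have heq : (b:ℝ) * (2 * (δ / (4 * b))^2) = δ^2/(8*b) := by
              field_simp; ring
            rw [heq, div_le_div_iff₀ (by positivity) (by norm_num : (0:ℝ) < 2)]
            nlinarith
    calc P Bad ≤ P (⋃ i : Fin n, ⋃ p ∈ N, E1 i p) + P (⋃ j : Fin b, E2 j) :=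
          measure_union_le _ _
      _ ≤ ENNReal.ofReal (δ/2) + ENNReal.ofReal (δ/2) := add_le_add hB1 hB2
      _ = ENNReal.ofReal δ := by
          rw [← ENNReal.ofReal_add (by linarith) (by linarith)]
          norm_num
  -- good set included in target
  have hsub : Badᶜ ⊆ {ω | |H (jstar ω) / n - (1 - θ)| ≤ |Hhat ω (jstar ω) / n - (1 - θ)|
      + Real.sqrt (4 * σ ^ 2 / ((c : ℝ) ^ 2 * n) * q * Real.log (4 * b / δ))} := by
    intro ω hω
    have h1 : ∀ i p, p ∈ N → |(ξ i p ω : ℝ)| < τ := by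
      intro i p hp
      by_contra hcon
      push_neg at hcon
      exact hω (Or.inl (Set.mem_iUnion.2 ⟨i, Set.mem_biUnion hp hcon⟩))
    have h2 : ∀ j, |∑ ip ∈ (Finset.univ : Finset (Fin n)) ×ˢ Pj j, (ξ ip.1 ip.2 ω : ℝ)| < τ₂ := by
      intro j
      by_contra hcon
      push_neg at hcon
      exact hω (Or.inr (Set.mem_iUnion.2 ⟨j, hcon⟩))
    set j := jstar ω with hj_def
    -- x bounds
    have hxb : ∀ i p, (0:ℤ) ≤ x i p ∧ x i p ≤ 1 := by
      intro i p
      have hxp : x i p = if ℓ i ∈ Set.Ico (l (2 ^ p.1 * (p.2 - 1))) (l (2 ^ p.1 * p.2))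
          then 1 else 0 := by
        conv_lhs => rw [← Prod.mk.eta (p := p)]
        exact hx i p.1 p.2
      rw [hxp]; split <;> simp
    have hhx : ∀ p, (0:ℝ) ≤ ((∑ i, x i p : ℤ) : ℝ) ∧ ((∑ i, x i p : ℤ) : ℝ) ≤ n := by
      intro p
      constructor
      · push_cast
        apply Finset.sum_nonneg
        intro i _
        exact_mod_cast (hxb i p).1
      · push_cast
        calc (∑ i, ((x i p : ℤ):ℝ)) ≤ ∑ _i : Fin n, (1:ℝ) := by
              apply Finset.sum_le_sum
              intro i _
              exact_mod_cast (hxb i p).2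
          _ = n := by rw [Finset.sum_const, Finset.card_univ, Fintype.card_fin]; simp
    -- no wraparound on Pj j
    have hsv : ∀ p ∈ Pj j, (s ω p : ℝ) = (c:ℝ) * ((∑ i, x i p : ℤ) : ℝ) + ∑ i, (ξ i p ω : ℝ) := by
      intro p hp
      have hv : s ω p = ∑ i, ((c : ℤ) * x i p + ξ i p ω) := by
        rw [hs]
        apply bmod_eq_self
        -- real bound
        have hvR : ((∑ i, ((c : ℤ) * x i p + ξ i p ω) : ℤ) : ℝ)
            = (c:ℝ) * ((∑ i, x i p : ℤ) : ℝ) + ∑ i, (ξ i p ω : ℝ) := by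
          push_cast
          rw [Finset.sum_add_distrib, Finset.mul_sum]
        have hξb : |∑ i, (ξ i p ω : ℝ)| ≤ (n:ℝ) * τ := by
          calc |∑ i, (ξ i p ω : ℝ)| ≤ ∑ i, |(ξ i p ω : ℝ)| := Finset.abs_sum_le_sum_abs _ _
            _ ≤ ∑ _i : Fin n, τ := Finset.sum_le_sum fun i _ => (h1 i p (hPsub j hp)).le
            _ = n * τ := by rw [Finset.sum_const, Finset.card_univ, Fintype.card_fin]; simp
        have habs : |((∑ i, ((c : ℤ) * x i p + ξ i p ω) : ℤ) : ℝ)| ≤ (c:ℝ)*n + n*τ := by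
          rw [hvR]
          calc |(c:ℝ) * ((∑ i, x i p : ℤ) : ℝ) + ∑ i, (ξ i p ω : ℝ)|
              ≤ |(c:ℝ) * ((∑ i, x i p : ℤ) : ℝ)| + |∑ i, (ξ i p ω : ℝ)| := abs_add_le _ _
            _ ≤ (c:ℝ)*n + n*τ := by
                apply add_le_add _ hξb
                rw [abs_mul, abs_of_nonneg hc0.le, abs_of_nonneg (hhx p).1]
                exact mul_le_mul_of_nonneg_left (hhx p).2 hc0.le
        have hlt : 2 * ((((∑ i, ((c : ℤ) * x i p + ξ i p ω) : ℤ)).natAbs : ℕ) : ℝ) < M := by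
          rw [Nat.cast_natAbs, Int.cast_abs]
          linarith
        exact_mod_cast hlt
      rw [hv]
      push_cast
      rw [Finset.sum_add_distrib, Finset.mul_sum]
    -- difference of cumulative sums
    have hHdiff : Hhat ω j = H j + (∑ p ∈ Pj j, ∑ i, (ξ i p ω : ℝ)) / c := by
      rw [hHhat, hH]
      have hterm : ∀ p ∈ Pj j, (s ω p : ℝ) / c
          = ((∑ i, x i p : ℤ) : ℝ) + (∑ i, (ξ i p ω : ℝ)) / c := by
        intro p hp
        rw [hsv p hp, add_div, mul_div_cancel_left₀ _ (ne_of_gt hc0)]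
      rw [Finset.sum_congr rfl hterm, Finset.sum_add_distrib, Finset.sum_div]
    have hW : |∑ p ∈ Pj j, ∑ i, (ξ i p ω : ℝ)| < τ₂ := by
      have := h2 j
      rwa [Finset.sum_product, Finset.sum_comm] at this
    -- sqrt equality
    have hsq : τ₂ / ((c:ℝ) * n) = Real.sqrt (4 * σ ^ 2 / ((c : ℝ) ^ 2 * n) * q
        * Real.log (4 * b / δ)) := by
      rw [show 4 * σ ^ 2 / ((c : ℝ) ^ 2 * n) * q * Real.log (4 * b / δ)
          = (4 * σ^2 * ((n:ℝ) * q) * Real.log (4 * b / δ)) / (((c:ℝ) * n)^2) by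
        field_simp]
      rw [Real.sqrt_div (by positivity), Real.sqrt_sq (by positivity), hτ₂_def]
    -- final triangle inequality
    simp only [Set.mem_setOf_eq]
    have htri : |H j / n - (1 - θ)| ≤ |H j / n - Hhat ω j / n| + |Hhat ω j / n - (1 - θ)| :=
      abs_sub_le _ _ _
    have hdist : |H j / n - Hhat ω j / n| ≤ Real.sqrt (4 * σ ^ 2 / ((c : ℝ) ^ 2 * n) * q
        * Real.log (4 * b / δ)) := by
      rw [← hsq]
      have heq : H j / n - Hhat ω j / n = -((∑ p ∈ Pj j, ∑ i, (ξ i p ω : ℝ)) / c / n) := by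
        rw [hHdiff]; ring
      rw [heq, abs_neg, div_div, abs_div,
        abs_of_nonneg (show (0:ℝ) ≤ (c:ℝ) * n by positivity)]
      have hmul := mul_le_mul_of_nonneg_right hW.le
        (show (0:ℝ) ≤ ((c:ℝ) * n)⁻¹ by positivity)
      simpa [div_eq_mul_inv] using hmul
    linarith [htri, hdist]
  -- conclude
  calc ENNReal.ofReal (1 - δ)
      = 1 - ENNReal.ofReal δ := by
        apply ENNReal.eq_sub_of_add_eq ENNReal.ofReal_ne_top
        rw [← ENNReal.ofReal_add (by linarith) (by linarith)]
        norm_num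
    _ ≤ 1 - P Bad := tsub_le_tsub_left hBadP 1
    _ = P Badᶜ := (prob_compl_eq_one_sub hBadMeas).symm
    _ ≤ P {ω | |H (jstar ω) / n - (1 - θ)| ≤ |Hhat ω (jstar ω) / n - (1 - θ)|
        + Real.sqrt (4 * σ ^ 2 / ((c : ℝ) ^ 2 * n) * q * Real.log (4 * b / δ))} :=
        measure_mono hsub
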